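/- Define φ(X) = Log((K+1)/2 + e^{2iθ}((K−1)/2) e^{−2i Im X}) and ξ(X) = Log((K+1)/(2K) − e^{2iθ}((K−1)/(2K)) e^{−2i Im X}). Then for all X ∈ ℂ: φ(X) + ξ(X + φ(X)) = 0 and ξ(X) + φ(X + ξ(X)) = 0. -/

import Mathlib

open Complex

private lemma conj_exp_I (u : ℂ) (hu : (starRingEnd ℂ) u = -u) :
    (starRingEnd ℂ) (Complex.exp u) = (Complex.exp u)⁻¹ := by
  rw [← Complex.exp_conj, hu, Complex.exp_neg]

private lemma exp_neg_two_log_im (z : ℂ) (hz : z ≠ 0) :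
    Complex.exp (-2 * ((Complex.log z).im : ℂ) * Complex.I)
      = (starRingEnd ℂ) z / z := by
  have h : z - (starRingEnd ℂ) z = (2 * z.im : ℝ) * I := Complex.sub_conj z
  have h1 : (-2 * ((Complex.log z).im : ℂ) * Complex.I)
      = (starRingEnd ℂ) (Complex.log z) - Complex.log z := by
    have h := Complex.sub_conj (Complex.log z)
    push_cast at h ⊢
    linear_combination h
  rw [h1, Complex.exp_sub, Complex.exp_conj, Complex.exp_log hz]

private lemma w_shift (X z : ℂ) (hz : z ≠ 0) :
    Complex.exp (-2 * ((X + Complex.log z).im : ℂ) * Complex.I)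
      = Complex.exp (-2 * (X.im : ℂ) * Complex.I) * ((starRingEnd ℂ) z / z) := by
  have h : (-2 * ((X + Complex.log z).im : ℂ) * Complex.I)
      = -2 * (X.im:ℂ) * Complex.I + -2 * ((Complex.log z).im : ℂ) * Complex.I := by
    push_cast [Complex.add_im]; ring
  rw [h, Complex.exp_add, exp_neg_two_log_im z hz]

private lemma re_pos_aux (p q : ℝ) (hpq : |q| < p) (E w : ℂ)
    (hEabs : ‖E‖ = 1) (hwabs : ‖w‖ = 1) :
    0 < ((p:ℂ) + E * (q:ℂ) * w).re := by
  have habs : ‖E * (q:ℂ) * w‖ = |q| := by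
    rw [norm_mul, norm_mul, hEabs, hwabs, Complex.norm_real, Real.norm_eq_abs]; ring
  have h1 : |(E * (q:ℂ) * w).re| ≤ |q| := habs ▸ Complex.abs_re_le_norm _
  have h2 := (abs_le.1 h1).1
  simp only [Complex.add_re, Complex.ofReal_re]
  linarith

private lemma arg_ne_pi_aux (p q : ℝ) (hpq : |q| < p) (E w : ℂ)
    (hEabs : ‖E‖ = 1) (hwabs : ‖w‖ = 1) :
    ((p:ℂ) + E * (q:ℂ) * w).arg ≠ Real.pi := by
  intro h
  have := (Complex.arg_eq_pi_iff.1 h).1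
  have := re_pos_aux p q hpq E w hEabs hwabs
  linarith

private lemma ne_zero_aux (p q : ℝ) (hpq : |q| < p) (E w : ℂ)
    (hEabs : ‖E‖ = 1) (hwabs : ‖w‖ = 1) :
    ((p:ℂ) + E * (q:ℂ) * w) ≠ 0 := by
  intro h
  have := re_pos_aux p q hpq E w hEabs hwabs
  rw [h] at this
  simp at this

private lemma key_aux (p q p' q' : ℝ) (E w : ℂ)
    (hEc : (starRingEnd ℂ) E = E⁻¹) (hwc : (starRingEnd ℂ) w = w⁻¹)
    (hEne : E ≠ 0) (hwne : w ≠ 0)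
    (h1 : p * p' + q * q' = 1) (h2 : p * q' + p' * q = 0)
    (hz : (p:ℂ) + E * (q:ℂ) * w ≠ 0) :
    (p':ℂ) + E * (q':ℂ) *
        (w * ((starRingEnd ℂ) ((p:ℂ) + E * (q:ℂ) * w) / ((p:ℂ) + E * (q:ℂ) * w)))
      = ((p:ℂ) + E * (q:ℂ) * w)⁻¹ := by
  have hcz : (starRingEnd ℂ) ((p:ℂ) + E * (q:ℂ) * w) = (p:ℂ) + E⁻¹ * (q:ℂ) * w⁻¹ := by
    simp [map_add, map_mul, hEc, hwc, Complex.conj_ofReal]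
  have h1c : (p:ℂ) * p' + q * q' = 1 := by exact_mod_cast h1
  have h2c : (p:ℂ) * q' + p' * q = 0 := by exact_mod_cast h2
  rw [hcz]
  apply eq_inv_of_mul_eq_one_left
  have hz' : (p:ℂ) + E * w * (q:ℂ) ≠ 0 := by rwa [mul_right_comm E]
  field_simp [hz, hz']
  linear_combination h1c + (E * w) * h2c



open Complex

/-- With `φ(X) = Log((K+1)/2 + e^{2iθ}((K-1)/2) e^{-2i Im X})` and
`ξ(X) = Log((K+1)/(2K) - e^{2iθ}((K-1)/(2K)) e^{-2i Im X})`, we have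
`φ(X) + ξ(X + φ(X)) = 0` and `ξ(X) + φ(X + ξ(X)) = 0` for all `X`. -/
theorem stmt5 (K θ : ℝ) (hK : 1 < K)
    (φ ξ : ℂ → ℂ)
    (hφ : ∀ X : ℂ, φ X = Complex.log (((K + 1) / 2 : ℂ)
      + Complex.exp (2 * θ * Complex.I) * ((K - 1) / 2 : ℂ)
        * Complex.exp (-2 * X.im * Complex.I)))
    (hξ : ∀ X : ℂ, ξ X = Complex.log (((K + 1) / (2 * K) : ℂ)
      - Complex.exp (2 * θ * Complex.I) * ((K - 1) / (2 * K) : ℂ)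
        * Complex.exp (-2 * X.im * Complex.I))) :
    ∀ X : ℂ, φ X + ξ (X + φ X) = 0 ∧ ξ X + φ (X + ξ X) = 0 := by
  intro X
  have hK0 : (0:ℝ) < K := lt_trans zero_lt_one hK
  have hK0' : K ≠ 0 := ne_of_gt hK0
  set p₁ : ℝ := (K+1)/2 with hp₁
  set q₁ : ℝ := (K-1)/2 with hq₁
  set p₂ : ℝ := (K+1)/(2*K) with hp₂
  set q₂ : ℝ := -((K-1)/(2*K)) with hq₂
  set E : ℂ := Complex.exp (2 * (θ:ℂ) * Complex.I) with hEdef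
  set w : ℂ := Complex.exp (-2 * (X.im:ℂ) * Complex.I) with hwdef
  have hEc : (starRingEnd ℂ) E = E⁻¹ := by
    rw [hEdef]
    refine conj_exp_I _ ?_
    simp only [map_mul, Complex.conj_I, Complex.conj_ofReal, map_ofNat]
    ring
  have hwc : (starRingEnd ℂ) w = w⁻¹ := by
    rw [hwdef]
    refine conj_exp_I _ ?_
    simp only [map_mul, Complex.conj_I, Complex.conj_ofReal, map_neg, map_ofNat]
    ring
  have hEne : E ≠ 0 := Complex.exp_ne_zero _
  have hwne : w ≠ 0 := Complex.exp_ne_zero _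
  have hEabs : ‖E‖ = 1 := by
    rw [hEdef, Complex.norm_exp]; simp
  have hwabs : ‖w‖ = 1 := by
    rw [hwdef, Complex.norm_exp]; simp
  have hq1lt : |q₁| < p₁ := by
    rw [hq₁, hp₁, _root_.abs_of_nonneg (by linarith)]; linarith
  have hq2lt : |q₂| < p₂ := by
    rw [hq₂, hp₂, _root_.abs_neg, _root_.abs_of_nonneg (by apply div_nonneg <;> linarith)]
    exact (div_lt_div_iff_of_pos_right (by linarith)).2 (by linarith)
  have h1a : p₁ * p₂ + q₁ * q₂ = 1 := by
    rw [hp₁, hq₁, hp₂, hq₂]; field_simp; ring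
  have h2a : p₁ * q₂ + p₂ * q₁ = 0 := by
    rw [hp₁, hq₁, hp₂, hq₂]; field_simp; ring
  have h1b : p₂ * p₁ + q₂ * q₁ = 1 := by linarith
  have h2b : p₂ * q₁ + p₁ * q₂ = 0 := by linarith
  set z₁ : ℂ := (p₁:ℂ) + E * (q₁:ℂ) * w with hz₁def
  set z₂ : ℂ := (p₂:ℂ) + E * (q₂:ℂ) * w with hz₂def
  have hz₁ne : z₁ ≠ 0 := ne_zero_aux p₁ q₁ hq1lt E w hEabs hwabs
  have hz₂ne : z₂ ≠ 0 := ne_zero_aux p₂ q₂ hq2lt E w hEabs hwabs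
  have harg₁ : z₁.arg ≠ Real.pi := arg_ne_pi_aux p₁ q₁ hq1lt E w hEabs hwabs
  have harg₂ : z₂.arg ≠ Real.pi := arg_ne_pi_aux p₂ q₂ hq2lt E w hEabs hwabs
  have hφ' : φ X = Complex.log z₁ := by
    rw [hφ X]; congr 1
    rw [hz₁def, hp₁, hq₁, hEdef, hwdef]; push_cast; ring
  have hξ' : ξ X = Complex.log z₂ := by
    rw [hξ X]; congr 1
    rw [hz₂def, hp₂, hq₂, hEdef, hwdef]; push_cast; ring
  constructor
  · rw [hφ', hξ (X + Complex.log z₁)]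
    rw [w_shift X z₁ hz₁ne]
    have harg2 : ((K+1)/(2*K):ℂ) - E * ((K-1)/(2*K):ℂ) * (w * ((starRingEnd ℂ) z₁ / z₁))
        = (p₂:ℂ) + E * (q₂:ℂ) * (w * ((starRingEnd ℂ) z₁ / z₁)) := by
      rw [hp₂, hq₂]; push_cast; ring
    rw [harg2, hz₁def,
      key_aux p₁ q₁ p₂ q₂ E w hEc hwc hEne hwne h1a h2a (hz₁def ▸ hz₁ne),
      Complex.log_inv _ (hz₁def ▸ harg₁), ← hz₁def]
    ring
  · rw [hξ', hφ (X + Complex.log z₂)]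
    rw [w_shift X z₂ hz₂ne]
    have harg2 : ((K+1)/2:ℂ) + E * ((K-1)/2:ℂ) * (w * ((starRingEnd ℂ) z₂ / z₂))
        = (p₁:ℂ) + E * (q₁:ℂ) * (w * ((starRingEnd ℂ) z₂ / z₂)) := by
      rw [hp₁, hq₁]; push_cast; ring
    rw [harg2, hz₂def,
      key_aux p₂ q₂ p₁ q₁ E w hEc hwc hEne hwne h1b h2b (hz₂def ▸ hz₂ne),
      Complex.log_inv _ (hz₂def ▸ harg₂), ← hz₂def]
    ring
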